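/- Let T be a topological space and U an open set of ℂ × T. If f : U → ℂ is continuous and for each t ∈ T the map z ↦ f(z,t) is holomorphic on the slice {z | (z,t) ∈ U}, then the partial derivative ∂f/∂z : U → ℂ is continuous on U. -/

import Mathlib

open Metric Set Complex intervalIntegral Real

/-- If `U` is open in `ℂ × T`, `f` is continuous on `U` and holomorphic in the
first variable on each slice, then the fiberwise partial derivative `∂f/∂z` is continuous on `U`. -/
theorem stmt_0 {T : Type*} [TopologicalSpace T] (U : Set (ℂ × T)) (hU : IsOpen U)
    (f : ℂ × T → ℂ) (hf : ContinuousOn f U)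
    (hol : ∀ p ∈ U, DifferentiableAt ℂ (fun z : ℂ => f (z, p.2)) p.1) :
    ContinuousOn (fun p : ℂ × T => deriv (fun z : ℂ => f (z, p.2)) p.1) U := by
  intro p₀ hp₀
  obtain ⟨u, v, hu, hv, hz₀, ht₀, huv⟩ := isOpen_prod_iff.1 hU p₀.1 p₀.2 hp₀
  obtain ⟨R, hR, hRu⟩ := Metric.nhds_basis_closedBall.mem_iff.1 (hu.mem_nhds hz₀)
  set z₀ := p₀.1 with hz₀def
  -- the closed ball of radius R around `z₀`, times `v`, is inside `U`
  have hball : closedBall z₀ R ×ˢ v ⊆ U := fun q hq => huv ⟨hRu hq.1, hq.2⟩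
  set S : Set (ℂ × T) := ball z₀ (R / 2) ×ˢ v with hSdef
  have hSopen : IsOpen S := (isOpen_ball).prod hv
  have hS₀ : p₀ ∈ S := ⟨mem_ball_self (by linarith), ht₀⟩
  set g : ℂ × T → ℂ := fun p =>
    (2 * π * I : ℂ)⁻¹ • ∮ z in C(z₀, R), ((z - p.1) ^ 2)⁻¹ • f (z, p.2) with hgdef
  -- the fiberwise derivative coincides with the Cauchy integral `g` on `S`
  have key : ∀ p ∈ S, deriv (fun z : ℂ => f (z, p.2)) p.1 = g p := by
    rintro ⟨z, t⟩ ⟨hz, ht⟩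
    have hV : IsOpen {w : ℂ | (w, t) ∈ U} := hU.preimage (Continuous.prodMk_left t)
    have hVsub : closedBall z₀ R ⊆ {w : ℂ | (w, t) ∈ U} := fun w hw => hball ⟨hw, ht⟩
    have hdiff : DifferentiableOn ℂ (fun w : ℂ => f (w, t)) {w : ℂ | (w, t) ∈ U} :=
      fun w hw => (hol (w, t) hw).differentiableWithinAt
    exact (Complex.two_pi_I_inv_smul_circleIntegral_sub_sq_inv_smul_of_differentiable hV hVsub
      hdiff (ball_subset_ball (by linarith) hz)).symm
  -- `g` is continuous on `S`
  have hgcont : ContinuousOn g S := by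
    rw [continuousOn_iff_continuous_restrict]
    have hcm : ∀ (θ : ℝ) (x : S), circleMap z₀ R θ - (x : ℂ × T).1 ≠ 0 := by
      intro θ x
      have h1 : circleMap z₀ R θ ∈ sphere z₀ R := circleMap_mem_sphere _ hR.le _
      have h2 : (x : ℂ × T).1 ∈ ball z₀ (R / 2) := x.2.1
      rw [mem_sphere, Complex.dist_eq] at h1
      rw [mem_ball, Complex.dist_eq] at h2
      intro h
      rw [sub_eq_zero] at h
      rw [h] at h1
      linarith
    have hint : Continuous fun x : S => ∮ z in C(z₀, R),
        ((z - (x : ℂ × T).1) ^ 2)⁻¹ • f (z, (x : ℂ × T).2) := by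
      simp only [circleIntegral]
      apply intervalIntegral.continuous_parametric_intervalIntegral_of_continuous'
      apply Continuous.fun_smul
      · have : Continuous fun q : S × ℝ => circleMap 0 R q.2 * I :=
          ((continuous_circleMap 0 R).comp continuous_snd).mul continuous_const
        simpa only [deriv_circleMap] using this
      apply Continuous.fun_smul
      · apply Continuous.fun_inv₀
        · exact (((continuous_circleMap z₀ R).comp continuous_snd).sub
            ((continuous_subtype_val.comp continuous_fst).fst)).pow 2
        · intro q
          exact pow_ne_zero 2 (hcm q.2 q.1)
      · apply hf.comp_continuous
        · exact ((continuous_circleMap z₀ R).comp continuous_snd).prodMk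
            ((continuous_subtype_val.comp continuous_fst).snd)
        · intro q
          exact hball ⟨sphere_subset_closedBall (circleMap_mem_sphere _ hR.le _), q.1.2.2⟩
    exact continuous_const.fun_smul hint
  have hgat : ContinuousAt g p₀ := hgcont.continuousAt (hSopen.mem_nhds hS₀)
  have heq : (fun p : ℂ × T => deriv (fun z : ℂ => f (z, p.2)) p.1) =ᶠ[nhds p₀] g :=
    Filter.eventually_of_mem (hSopen.mem_nhds hS₀) key
  exact (hgat.congr heq.symm).continuousWithinAt
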